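/- For the matrix A ∈ M₄(ℂ) with A = H + iK, H = diag(0,0,1,1), and K as above (entries k₁, k₂ in positions (1,3),(3,1) and (2,4),(4,2), and r in (3,4),(4,3)), every z ∈ F(A) satisfies 0 ≤ Re z ≤ 1, the point 0 lies on ∂F(A), and f_A⁻¹(0) equals the set of unit vectors in span{e₁, e₂}. -/

import Mathlib

open Matrix

/-- The field of values generating function `f_A(x) = x* A x`. -/
noncomputable def fA {m : Type*} [Fintype m] (A : Matrix m m ℂ) (x : m → ℂ) : ℂ :=
  star x ⬝ᵥ A.mulVec x

/-- The numerical range (field of values) of `A`. -/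
def NR {m : Type*} [Fintype m] (A : Matrix m m ℂ) : Set ℂ :=
  {z | ∃ x, star x ⬝ᵥ x = 1 ∧ fA A x = z}

/-- Euclidean norm on `m → ℂ`. -/
noncomputable def enorm₂ {m : Type*} [Fintype m] (x : m → ℂ) : ℝ :=
  Real.sqrt (∑ i, ‖x i‖ ^ 2)

/-- Projective distance: infimum of `‖x - ω • y‖` over unimodular `ω`. -/
noncomputable def projDist {m : Type*} [Fintype m] (x y : m → ℂ) : ℝ :=
  sInf {d | ∃ ω : ℂ, ‖ω‖ = 1 ∧ d = enorm₂ (x - ω • y)}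

lemma fA_re' (k₁ k₂ r : ℝ) (x : Fin 4 → ℂ) :
    (fA (Matrix.diagonal ![0,0,1,1] + Complex.I • !![0,0,(k₁:ℂ),0; 0,0,0,(k₂:ℂ); (k₁:ℂ),0,0,(r:ℂ); 0,(k₂:ℂ),(r:ℂ),0]) x).re
      = Complex.normSq (x 2) + Complex.normSq (x 3) := by
  simp [fA, Matrix.mulVec, dotProduct, Fin.sum_univ_four, Matrix.diagonal,
    Complex.normSq_apply, Complex.add_re, Complex.mul_re,
    Complex.add_im, Complex.mul_im, Complex.I_re, Complex.I_im]
  ring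

lemma unit_re (x : Fin 4 → ℂ) (h : star x ⬝ᵥ x = 1) :
    Complex.normSq (x 0) + Complex.normSq (x 1) + Complex.normSq (x 2) + Complex.normSq (x 3) = 1 := by
  have := congrArg Complex.re h
  simpa [dotProduct, Fin.sum_univ_four, Complex.mul_re, Complex.normSq_apply,
    mul_comm] using this

theorem concrete_4x4_range_and_preimage_of_zero
    (k₁ k₂ r : ℝ) (hk : k₂ < k₁) (hk₂ : 0 < k₂) (hr : 0 < r) :
    let H : Matrix (Fin 4) (Fin 4) ℂ := Matrix.diagonal ![0,0,1,1]
    let K : Matrix (Fin 4) (Fin 4) ℂ :=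
      !![0,0,(k₁:ℂ),0; 0,0,0,(k₂:ℂ); (k₁:ℂ),0,0,(r:ℂ); 0,(k₂:ℂ),(r:ℂ),0]
    let A : Matrix (Fin 4) (Fin 4) ℂ := H + Complex.I • K
    (∀ z ∈ NR A, 0 ≤ z.re ∧ z.re ≤ 1) ∧
    (0:ℂ) ∈ frontier (NR A) ∧
    {x : Fin 4 → ℂ | star x ⬝ᵥ x = 1 ∧ fA A x = 0} =
      {x : Fin 4 → ℂ | star x ⬝ᵥ x = 1 ∧ x 2 = 0 ∧ x 3 = 0} := by
  intro H K A
  have hre : ∀ x : Fin 4 → ℂ, (fA A x).re = Complex.normSq (x 2) + Complex.normSq (x 3) :=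
    fun x => fA_re' k₁ k₂ r x
  have hrange : ∀ z ∈ NR A, 0 ≤ z.re ∧ z.re ≤ 1 := by
    rintro z ⟨x, hx, rfl⟩
    have h1 := unit_re x hx
    have h2 := hre x
    constructor
    · rw [h2]; exact add_nonneg (Complex.normSq_nonneg _) (Complex.normSq_nonneg _)
    · nlinarith [Complex.normSq_nonneg (x 0), Complex.normSq_nonneg (x 1)]
  refine ⟨hrange, ?_, ?_⟩
  · -- 0 on frontier
    have hmem : (0:ℂ) ∈ NR A := by
      refine ⟨![1,0,0,0], ?_, ?_⟩
      · simp [dotProduct, Fin.sum_univ_four]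
      · have := hre ![1,0,0,0]
        have him : (fA A ![1,0,0,0]).im = 0 := by
          simp [A, H, K, fA, Matrix.mulVec, dotProduct, Fin.sum_univ_four,
            Matrix.diagonal, Matrix.vecHead, Matrix.vecTail]
        apply Complex.ext
        · simpa using this
        · simpa using him
    constructor
    · exact subset_closure hmem
    · -- not in interior
      intro hint
      have hsub : NR A ⊆ {z : ℂ | 0 ≤ z.re} := fun z hz => (hrange z hz).1
      have : (0:ℂ) ∈ interior {z : ℂ | 0 ≤ z.re} := interior_mono hsub hint
      have hop : interior {z : ℂ | 0 ≤ z.re} ⊆ {z : ℂ | 0 < z.re} := by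
        intro z hz
        by_contra hzre
        simp only [Set.mem_setOf_eq, not_lt] at hzre
        have hle : z.re ≤ 0 := hzre
        obtain ⟨ε, hε, hball⟩ := Metric.isOpen_iff.1 isOpen_interior z hz
        have : z - (ε/2 : ℝ) ∈ interior {w : ℂ | 0 ≤ w.re} := by
          apply hball
          simp [Complex.dist_eq, Complex.norm_real, abs_of_pos, hε, half_lt_self]
        have := interior_subset this
        simp only [Set.mem_setOf_eq, Complex.sub_re, Complex.ofReal_re] at this
        linarith
      have := hop this
      simp at this
  · -- preimage of 0
    ext x
    simp only [Set.mem_setOf_eq]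
    constructor
    · rintro ⟨hx, hf⟩
      have h2 := hre x
      rw [hf] at h2
      simp only [Complex.zero_re] at h2
      have h3 : Complex.normSq (x 2) = 0 ∧ Complex.normSq (x 3) = 0 := by
        constructor <;> nlinarith [Complex.normSq_nonneg (x 2), Complex.normSq_nonneg (x 3)]
      exact ⟨hx, Complex.normSq_eq_zero.1 h3.1, Complex.normSq_eq_zero.1 h3.2⟩
    · rintro ⟨hx, h2, h3⟩
      refine ⟨hx, ?_⟩
      simp [A, H, K, fA, Matrix.mulVec, dotProduct, Fin.sum_univ_four,
        Matrix.diagonal, Matrix.vecHead, Matrix.vecTail, h2, h3]
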